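/- Let (x,z) be a feasible solution to Forest-BCR. Then for every pair P ∈ 𝒫 and every set U ⊆ V with P∩U ≠ ∅ and P∖U ≠ ∅, one has ∑_{r∈V} ( ∑_{e∈δ⁺(U)} x^{r}_e + ∑_{e∈δ⁻(U)} x^{r}_e ) ≥ 1. (In particular, the undirected vector x̃ with x̃_{{u,v}} = ∑_{r∈V} (x^r_{(u,v)} + x^r_{(v,u)}) is a feasible solution to the undirected cut relaxation of Steiner Forest.) -/
import Mathlib


open Finset

noncomputable section

variable {V : Type*}

/-- The set of terminals: vertices occurring in some pair of `P`. -/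
def terminals [Fintype V] [DecidableEq V] (P : Finset (Finset V)) : Finset V :=
  Finset.univ.filter fun v => ∃ p ∈ P, v ∈ p

/-- Feasibility for the Forest-BCR linear program: `x r u v` is the value of the
variable `x^r_{(u,v)}` and `z r p` is the value of `z^r_P`. -/
def ForestBCRFeasible [Fintype V] [DecidableEq V] (P : Finset (Finset V))
    (x : V → V → V → ℝ) (z : V → Finset V → ℝ) : Prop :=
  (∀ r u v : V, u ≠ v → 0 ≤ x r u v) ∧
  (∀ r : V, ∀ p ∈ P, 0 ≤ z r p) ∧
  (∀ p ∈ P, ∑ r : V, z r p = 1) ∧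
  (∀ r : V, ∀ p ∈ P, ∀ U : Finset V, r ∉ U → (p ∩ U).Nonempty →
    z r p ≤ ∑ u ∈ U, ∑ v ∈ Uᶜ, x r u v)

/-- The cost `c(x)` of a Forest-BCR solution. -/
def bcrCost [Fintype V] [DecidableEq V] (c : V → V → ℝ) (x : V → V → V → ℝ) : ℝ :=
  ∑ r : V, ∑ u : V, ∑ v ∈ Finset.univ.erase u, c u v * x r u v

/-- Half-integrality of a Forest-BCR solution. -/
def HalfIntegralSol [Fintype V] [DecidableEq V] (P : Finset (Finset V))
    (x : V → V → V → ℝ) (z : V → Finset V → ℝ) : Prop :=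
  (∀ r u v : V, u ≠ v → ∃ n : ℤ, x r u v = n / 2) ∧
  (∀ r : V, ∀ p ∈ P, ∃ n : ℤ, z r p = n / 2)

/-- The solution `x` is supported on the graph `G`. -/
def SupportedOn (G : SimpleGraph V) (x : V → V → V → ℝ) : Prop :=
  ∀ r u v : V, u ≠ v → ¬ G.Adj u v → x r u v = 0

/-- Forest-BCR strengthens the undirected cut relaxation: for every
feasible solution `(x, z)`, every pair `P ∈ 𝒫`, and every set `U` separating the two
vertices of the pair, the total `x`-value of the edges crossing `U` (in either
direction) is at least `1`. -/
theorem forestBCR_implies_undirected_cut_relaxation [Fintype V] [DecidableEq V]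
    (P : Finset (Finset V)) (hP : ∀ p ∈ P, p.card = 2)
    (x : V → V → V → ℝ) (z : V → Finset V → ℝ)
    (hfeas : ForestBCRFeasible P x z) :
    ∀ p ∈ P, ∀ U : Finset V, (p ∩ U).Nonempty → (p \ U).Nonempty →
      1 ≤ ∑ r : V, ((∑ u ∈ U, ∑ v ∈ Uᶜ, x r u v) + ∑ u ∈ Uᶜ, ∑ v ∈ U, x r u v) := by
  intro p hp U h1 h2
  obtain ⟨hx, hz, hzsum, hcut⟩ := hfeas
  have hnn : ∀ r : V, ∀ A : Finset V, 0 ≤ ∑ u ∈ A, ∑ v ∈ Aᶜ, x r u v := by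
    intro r A
    refine Finset.sum_nonneg fun u hu => Finset.sum_nonneg fun v hv => ?_
    exact hx r u v (fun h => (Finset.mem_compl.mp hv) (h ▸ hu))
  have key : ∀ r : V, z r p ≤ (∑ u ∈ U, ∑ v ∈ Uᶜ, x r u v) + ∑ u ∈ Uᶜ, ∑ v ∈ U, x r u v := by
    intro r
    by_cases hr : r ∈ U
    · have h2' : (p ∩ Uᶜ).Nonempty := by
        obtain ⟨w, hw⟩ := h2
        exact ⟨w, Finset.mem_inter.mpr ⟨(Finset.mem_sdiff.mp hw).1,
          Finset.mem_compl.mpr (Finset.mem_sdiff.mp hw).2⟩⟩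
      have := hcut r p hp Uᶜ (by simp [hr]) h2'
      calc z r p ≤ ∑ u ∈ Uᶜ, ∑ v ∈ Uᶜᶜ, x r u v := this
        _ = ∑ u ∈ Uᶜ, ∑ v ∈ U, x r u v := by rw [compl_compl]
        _ ≤ _ := le_add_of_nonneg_left (hnn r U)
    · have := hcut r p hp U hr h1
      calc z r p ≤ ∑ u ∈ U, ∑ v ∈ Uᶜ, x r u v := this
        _ ≤ _ := by
            have := hnn r Uᶜ
            rw [compl_compl] at this
            linarith
  calc (1:ℝ) = ∑ r : V, z r p := (hzsum p hp).symm
    _ ≤ _ := Finset.sum_le_sum fun r _ => key r
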